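/- Let A generate an extreme ray of the copositive cone C_n. Then rank A = 1 if and only if A is positive semidefinite. -/

import Mathlib

open Matrix BigOperators

def Copositive {ι : Type} [Fintype ι] (A : Matrix ι ι ℝ) : Prop :=
  A.IsSymm ∧ ∀ x : ι → ℝ, (∀ i, 0 ≤ x i) → 0 ≤ x ⬝ᵥ A.mulVec x

def CompletelyPositive {ι : Type} [Fintype ι] (M : Matrix ι ι ℝ) : Prop :=
  ∃ (p : ℕ) (v : Fin p → ι → ℝ), (∀ j i, 0 ≤ v j i) ∧
    M = ∑ j, Matrix.vecMulVec (v j) (v j)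

noncomputable def cpRank {ι : Type} [Fintype ι] (M : Matrix ι ι ℝ) : ℕ :=
  sInf {p : ℕ | ∃ v : Fin p → ι → ℝ, (∀ j i, 0 ≤ v j i) ∧
    M = ∑ j, Matrix.vecMulVec (v j) (v j)}

noncomputable def pmax (n : ℕ) : ℕ :=
  sSup {k : ℕ | ∃ M : Matrix (Fin n) (Fin n) ℝ, CompletelyPositive M ∧ cpRank M = k}

def ExtremeCopositive {ι : Type} [Fintype ι] (A : Matrix ι ι ℝ) : Prop :=
  Copositive A ∧ A ≠ 0 ∧ ∀ B C : Matrix ι ι ℝ, Copositive B → Copositive C → A = B + C →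
    ∃ s t : ℝ, 0 ≤ s ∧ 0 ≤ t ∧ B = s • A ∧ C = t • A

def E12 (k : ℕ) : Matrix (Fin k) (Fin k) ℝ :=
  Matrix.of fun i j => if (i.val = 0 ∧ j.val = 1) ∨ (i.val = 1 ∧ j.val = 0) then 1 else 0

def InOrbitOfE12 {k : ℕ} (S : Matrix (Fin k) (Fin k) ℝ) : Prop :=
  ∃ (d : Fin k → ℝ) (σ : Equiv.Perm (Fin k)), (∀ i, 0 < d i) ∧
    S = Matrix.diagonal d * (σ.permMatrix ℝ)ᵀ * E12 k * σ.permMatrix ℝ * Matrix.diagonal d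

section Aux

variable {n : ℕ}

/-- Cauchy-Schwarz for the quadratic form of a PSD real matrix. -/
private lemma psd_cauchy_schwarz {A : Matrix (Fin n) (Fin n) ℝ} (hpsd : A.PosSemidef)
    (x y : Fin n → ℝ) :
    (x ⬝ᵥ A.mulVec y) ^ 2 ≤ (x ⬝ᵥ A.mulVec x) * (y ⬝ᵥ A.mulVec y) := by
  have hsym : Aᵀ = A := by
    have := hpsd.1
    rwa [Matrix.IsHermitian, conjTranspose_eq_transpose_of_trivial] at this
  have hswap : ∀ u v : Fin n → ℝ, u ⬝ᵥ A.mulVec v = v ⬝ᵥ A.mulVec u := by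
    intro u v
    rw [dotProduct_mulVec]
    conv_lhs => rw [← hsym]
    rw [vecMul_transpose, dotProduct_comm]
  have hq : ∀ z : Fin n → ℝ, 0 ≤ z ⬝ᵥ A.mulVec z := by
    intro z
    simpa using hpsd.dotProduct_mulVec_nonneg z
  have key : ∀ t : ℝ, 0 ≤ (y ⬝ᵥ A.mulVec y) * (t * t) + (2 * (x ⬝ᵥ A.mulVec y)) * t
      + x ⬝ᵥ A.mulVec x := by
    intro t
    have h := hq (x + t • y)
    have hexp : (x + t • y) ⬝ᵥ A.mulVec (x + t • y)
        = (y ⬝ᵥ A.mulVec y) * (t * t) + (2 * (x ⬝ᵥ A.mulVec y)) * t + x ⬝ᵥ A.mulVec x := by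
      simp only [mulVec_add, dotProduct_add, add_dotProduct, mulVec_smul,
        dotProduct_smul, smul_dotProduct, smul_eq_mul]
      rw [hswap y x]
      ring
    linarith [hexp ▸ h]
  have hd := discrim_le_zero key
  rw [discrim] at hd
  nlinarith [hd]

end Aux

theorem stmt8 {n : ℕ} (A : Matrix (Fin n) (Fin n) ℝ) (hext : ExtremeCopositive A) :
    A.rank = 1 ↔ A.PosSemidef := by
  obtain ⟨⟨hsym, hcop⟩, hne, hsplit⟩ := hext
  have hA : A.IsHermitian := by
    rwa [Matrix.IsHermitian, conjTranspose_eq_transpose_of_trivial]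
  have hdiag : ∀ i, 0 ≤ A i i := by
    intro i
    have hnn : ∀ j, 0 ≤ (Pi.single i 1 : Fin n → ℝ) j := by
      intro j
      rcases eq_or_ne j i with h | h
      · subst h; rw [Pi.single_eq_same]; exact zero_le_one
      · rw [Pi.single_eq_of_ne h]
    have := hcop (Pi.single i 1) hnn
    simpa [single_dotProduct] using this
  constructor
  · -- rank 1 → PSD
    intro hrank
    have hcard : Fintype.card {i // hA.eigenvalues i ≠ 0} = 1 := by
      rw [← hA.rank_eq_card_non_zero_eigs]; exact hrank
    obtain ⟨⟨i₀, hi₀⟩, huniq⟩ := Fintype.card_eq_one_iff.mp hcard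
    have hzero : ∀ i, i ≠ i₀ → hA.eigenvalues i = 0 := by
      intro i hi
      by_contra h
      exact hi (congrArg Subtype.val (huniq ⟨i, h⟩))
    -- trace equals sum of eigenvalues
    have hU1 : (star (hA.eigenvectorUnitary : Matrix (Fin n) (Fin n) ℝ))
        * (hA.eigenvectorUnitary : Matrix (Fin n) (Fin n) ℝ) = 1 :=
      Unitary.coe_star_mul_self hA.eigenvectorUnitary
    have htr : A.trace = ∑ i, hA.eigenvalues i := by
      calc A.trace
          = (((hA.eigenvectorUnitary : Matrix (Fin n) (Fin n) ℝ)
            * diagonal (RCLike.ofReal ∘ hA.eigenvalues))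
            * (star (hA.eigenvectorUnitary : Matrix (Fin n) (Fin n) ℝ))).trace := by
            conv_lhs => rw [hA.spectral_theorem, Unitary.conjStarAlgAut_apply]
        _ = ((star (hA.eigenvectorUnitary : Matrix (Fin n) (Fin n) ℝ))
            * ((hA.eigenvectorUnitary : Matrix (Fin n) (Fin n) ℝ)
            * diagonal (RCLike.ofReal ∘ hA.eigenvalues))).trace := trace_mul_comm _ _
        _ = (diagonal (RCLike.ofReal ∘ hA.eigenvalues)).trace := by
            rw [← mul_assoc, hU1, one_mul]
        _ = ∑ i, hA.eigenvalues i := by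
            simp [trace_diagonal]
    have hsum : ∑ i, hA.eigenvalues i = hA.eigenvalues i₀ :=
      Finset.sum_eq_single_of_mem i₀ (Finset.mem_univ _) (fun b _ hb => hzero b hb)
    have htrnn : 0 ≤ A.trace := by
      unfold Matrix.trace
      exact Finset.sum_nonneg fun i _ => hdiag i
    have hpos : 0 ≤ hA.eigenvalues i₀ := by
      rw [← hsum, ← htr]; exact htrnn
    simp only [hA.posSemidef_iff_eigenvalues_nonneg, Pi.le_def, Pi.zero_apply]
    intro i
    rcases eq_or_ne i i₀ with h | h
    · rw [h]; exact hpos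
    · rw [hzero i h]
  · -- PSD → rank 1
    intro hpsd
    -- there is a positive diagonal entry
    have hex : ∃ i, A i i ≠ 0 := by
      by_contra h
      push_neg at h
      apply hne
      ext i j
      have hcs := psd_cauchy_schwarz hpsd (Pi.single i 1) (Pi.single j 1)
      simp only [single_dotProduct, mulVec_single, one_mul, mul_one, MulOpposite.op_one, one_smul, col_apply] at hcs
      have : (A i j) ^ 2 ≤ 0 := by
        calc (A i j) ^ 2 ≤ A i i * A j j := hcs
          _ = 0 := by rw [h i, zero_mul]
      have := pow_eq_zero_iff (n := 2) (by norm_num) |>.mp (le_antisymm this (sq_nonneg _))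
      simpa using this
    obtain ⟨i₀, hi₀⟩ := hex
    set c : ℝ := A i₀ i₀ with hc
    have hcpos : 0 < c := lt_of_le_of_ne (hdiag i₀) (Ne.symm hi₀)
    set a : Fin n → ℝ := A i₀ with ha
    have ha0 : a i₀ = c := rfl
    -- key facts about the row a
    have hsymT : Aᵀ = A := hsym
    have hAmulsingle : A.mulVec (Pi.single i₀ 1) = a := by
      rw [mulVec_single_one]; ext j; exact congrFun (congrFun hsymT i₀) j
    have hax : ∀ x : Fin n → ℝ, x ⬝ᵥ A.mulVec (Pi.single i₀ 1) = a ⬝ᵥ x := by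
      intro x
      rw [hAmulsingle, dotProduct_comm]
    set B : Matrix (Fin n) (Fin n) ℝ := c⁻¹ • vecMulVec a a with hB
    have hBmul : ∀ x : Fin n → ℝ, B.mulVec x = (c⁻¹ * (a ⬝ᵥ x)) • a := by
      intro x
      ext k
      simp only [hB, mulVec, dotProduct, Pi.smul_apply, Matrix.smul_apply, vecMulVec_apply,
        smul_eq_mul, Finset.mul_sum, Finset.sum_mul]
      exact Finset.sum_congr rfl fun j _ => by ring
    have hBquad : ∀ x : Fin n → ℝ, x ⬝ᵥ B.mulVec x = c⁻¹ * ((a ⬝ᵥ x) * (a ⬝ᵥ x)) := by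
      intro x
      rw [hBmul, dotProduct_smul, smul_eq_mul, dotProduct_comm x a]
      ring
    have hBsymm : B.IsSymm := by
      unfold Matrix.IsSymm
      ext i j
      simp only [hB, transpose_apply, Matrix.smul_apply, vecMulVec_apply, smul_eq_mul]
      ring
    have hBcop : Copositive B := by
      refine ⟨hBsymm, fun x _ => ?_⟩
      rw [hBquad]
      exact mul_nonneg (inv_nonneg.mpr hcpos.le) (mul_self_nonneg _)
    have hCcop : Copositive (A - B) := by
      refine ⟨?_, fun x _ => ?_⟩
      · unfold Matrix.IsSymm
        have hBsymT : Bᵀ = B := hBsymm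
        rw [transpose_sub, hsymT, hBsymT]
      · have hcs := psd_cauchy_schwarz hpsd x (Pi.single i₀ 1)
        rw [hax x] at hcs
        have h2 : Pi.single i₀ (1:ℝ) ⬝ᵥ A.mulVec (Pi.single i₀ 1) = c := by
          rw [hAmulsingle, single_dotProduct, one_mul, ha0]
        rw [h2] at hcs
        rw [sub_mulVec, dotProduct_sub, hBquad]
        have hq : 0 ≤ x ⬝ᵥ A.mulVec x := by simpa using hpsd.dotProduct_mulVec_nonneg x
        rw [sub_nonneg, ← sq]
        calc c⁻¹ * (a ⬝ᵥ x) ^ 2 ≤ c⁻¹ * ((x ⬝ᵥ A.mulVec x) * c) := by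
              apply mul_le_mul_of_nonneg_left hcs (inv_nonneg.mpr hcpos.le)
          _ = x ⬝ᵥ A.mulVec x := by field_simp
    obtain ⟨s, t, hs, ht, hBs, _⟩ := hsplit B (A - B) hBcop hCcop (by abel)
    -- from B = s • A and B i₀ i₀ = c ≠ 0, deduce s = 1, hence A = B
    have hBii : B i₀ i₀ = c := by
      simp only [hB, Matrix.smul_apply, vecMulVec_apply, smul_eq_mul, ha0]
      rw [← mul_assoc, inv_mul_cancel₀ hi₀, one_mul]
    have hs1 : s = 1 := by
      have h := congrFun (congrFun hBs i₀) i₀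
      rw [hBii] at h
      simp only [Matrix.smul_apply, smul_eq_mul] at h
      have h2 : c = s * c := h
      have h3 : s * c = 1 * c := by rw [one_mul]; exact h2.symm
      exact mul_right_cancel₀ hi₀ h3
    have hAB : A = B := by rw [hBs, hs1, one_smul]
    -- now compute the rank
    have hane : a ≠ 0 := fun h => hi₀ (by rw [← ha0, h]; rfl)
    have hrange : LinearMap.range A.mulVecLin ≤ (ℝ ∙ a) := by
      rintro - ⟨x, rfl⟩
      rw [mulVecLin_apply, hAB, hBmul]
      exact Submodule.smul_mem _ _ (Submodule.mem_span_singleton_self a)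
    have hle : A.rank ≤ 1 := by
      rw [Matrix.rank]
      calc Module.finrank ℝ (LinearMap.range A.mulVecLin)
          ≤ Module.finrank ℝ (ℝ ∙ a) := Submodule.finrank_mono hrange
        _ = 1 := finrank_span_singleton hane
    have hnezero : A.rank ≠ 0 := by
      intro h0
      rw [Matrix.rank, Submodule.finrank_eq_zero] at h0
      have hmem : a ∈ LinearMap.range A.mulVecLin :=
        ⟨Pi.single i₀ 1, by rw [mulVecLin_apply, hAmulsingle]⟩
      rw [h0] at hmem
      exact hane (Submodule.mem_bot ℝ |>.mp hmem)
    omega
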